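/- Let G = (V,E) be a finite simple graph without isolated vertices, α a natural number, and 𝒞 a sigma uniform clique cover of G with wgt(𝒞) ≤ |V| + α. Then either G is a uniform cluster graph, or there exist a vertex u ∈ V and sets A, B ⊆ N_G(u) with A ∪ B = N_G(u) such that the split G′ of G at u along (A,B) satisfies: (1) G′ admits a sigma uniform clique cover 𝒞′ with wgt(𝒞′) ≤ |V(G′)| + α − 1 (where |V(G′)| = |V| + 1), and (2) G′ has no isolated vertices. -/

import Mathlib

namespace Paper

/-- A sigma `s`-clique cover of `G`: a multiset of vertex sets, each inducing a clique on
exactly `s` vertices, such that every edge of `G` has both endpoints in some member. -/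
def IsSigmaCliqueCover {V : Type*} (G : SimpleGraph V) (s : ℕ)
    (C : Multiset (Finset V)) : Prop :=
  (∀ Q ∈ C, G.IsClique (Q : Set V) ∧ Q.card = s) ∧
  (∀ x y : V, G.Adj x y → ∃ Q ∈ C, x ∈ Q ∧ y ∈ Q)

/-- A sigma uniform clique cover of `G`: a multiset of vertex sets, each inducing a clique,
all of the same cardinality, such that every edge of `G` has both endpoints in some member. -/
def IsSigmaUniformCover {V : Type*} (G : SimpleGraph V) (C : Multiset (Finset V)) : Prop :=
  (∀ Q ∈ C, G.IsClique (Q : Set V)) ∧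
  (∃ s : ℕ, ∀ Q ∈ C, Q.card = s) ∧
  (∀ x y : V, G.Adj x y → ∃ Q ∈ C, x ∈ Q ∧ y ∈ Q)

/-- `freq_𝒞(v)`: the number of members of `𝒞` containing `v` (with multiplicity). -/
def freqC {V : Type*} [DecidableEq V] (C : Multiset (Finset V)) (v : V) : ℕ :=
  (C.filter fun Q => v ∈ Q).card

/-- `cost(𝒞) = Σ_v max(0, freq_𝒞(v) - 1)`. -/
def costC {V : Type*} [Fintype V] [DecidableEq V] (C : Multiset (Finset V)) : ℕ :=
  ∑ v : V, (freqC C v - 1)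

/-- `wgt(𝒞) = Σ_v freq_𝒞(v)`. -/
def wgt {V : Type*} [Fintype V] [DecidableEq V] (C : Multiset (Finset V)) : ℕ :=
  ∑ v : V, freqC C v

/-- The vertex set of the connected component of `v` in `G`. -/
def compSet {V : Type*} (G : SimpleGraph V) (v : V) : Set V := {w | G.Reachable v w}

/-- A cluster graph: no induced `P₃`; equivalently, every connected component induces a clique. -/
def IsClusterGraph {V : Type*} (G : SimpleGraph V) : Prop :=
  ∀ ⦃x y z : V⦄, G.Adj x y → G.Adj y z → x ≠ z → G.Adj x z

/-- A uniform cluster graph: every connected component induces a clique and all connected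
components have the same number of vertices. -/
def IsUniformCluster {V : Type*} (G : SimpleGraph V) : Prop :=
  IsClusterGraph G ∧ ∀ v w : V, (compSet G v).ncard = (compSet G w).ncard

/-- The split of `G` at `u` along `(A, B)`: a fresh vertex `none` is added; the copy `u`
keeps exactly the neighbors in `A`, the new copy `none` gets exactly the neighbors in `B`,
the two copies are non-adjacent, and all other adjacencies are unchanged. -/
def splitGraph {V : Type*} (G : SimpleGraph V) (u : V) (A B : Set V) :
    SimpleGraph (Option V) where
  Adj x y :=
    match x, y with
    | some a, some b =>
        (a ≠ u ∧ b ≠ u ∧ G.Adj a b) ∨ (a = u ∧ b ≠ u ∧ b ∈ A) ∨ (b = u ∧ a ≠ u ∧ a ∈ A)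
    | some a, none => a ≠ u ∧ a ∈ B
    | none, some b => b ≠ u ∧ b ∈ B
    | none, none => False
  symm := by
    constructor
    rintro (_ | a) (_ | b) h
    · exact h
    · exact h
    · exact h
    · rcases h with ⟨h1, h2, h3⟩ | ⟨h1, h2, h3⟩ | ⟨h1, h2, h3⟩
      · exact Or.inl ⟨h2, h1, h3.symm⟩
      · exact Or.inr (Or.inr ⟨h1, h2, h3⟩)
      · exact Or.inr (Or.inl ⟨h1, h2, h3⟩)
  loopless := by
    constructor
    rintro (_ | a) h
    · exact h
    · rcases h with ⟨_, _, h3⟩ | ⟨h1, h2, _⟩ | ⟨h1, h2, _⟩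
      · exact G.irrefl h3
      · exact h2 h1
      · exact h2 h1


lemma split_adj_ss {V : Type*} (G : SimpleGraph V) (u : V) (A B : Set V) (a b : V) :
    (splitGraph G u A B).Adj (some a) (some b) ↔
      (a ≠ u ∧ b ≠ u ∧ G.Adj a b) ∨ (a = u ∧ b ≠ u ∧ b ∈ A) ∨ (b = u ∧ a ≠ u ∧ a ∈ A) :=
  Iff.rfl

lemma split_adj_sn {V : Type*} (G : SimpleGraph V) (u : V) (A B : Set V) (a : V) :
    (splitGraph G u A B).Adj (some a) none ↔ a ≠ u ∧ a ∈ B := Iff.rfl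

lemma split_adj_ns {V : Type*} (G : SimpleGraph V) (u : V) (A B : Set V) (b : V) :
    (splitGraph G u A B).Adj none (some b) ↔ b ≠ u ∧ b ∈ B := Iff.rfl

lemma split_adj_nn {V : Type*} (G : SimpleGraph V) (u : V) (A B : Set V) :
    (splitGraph G u A B).Adj none none ↔ False := Iff.rfl

lemma mem_card_le_one {α : Type*} [DecidableEq α] {s : Multiset α} (h : Multiset.card s ≤ 1)
    {a b : α} (ha : a ∈ s) (hb : b ∈ s) : a = b := by
  by_contra hne
  have hb' : b ∈ s.erase a := by
    rw [Multiset.mem_erase_of_ne (Ne.symm hne)]; exact hb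
  have h1 : 0 < Multiset.card (s.erase a) := Multiset.card_pos.2 (by
    intro h0; rw [h0] at hb'; exact absurd hb' (Multiset.notMem_zero b))
  have h2 : Multiset.card s = Multiset.card (s.erase a) + 1 := by
    conv_lhs => rw [← Multiset.cons_erase ha]
    simp
  omega

lemma sum_map_const_of {α : Type*} {M : Multiset α} {f : α → ℕ} {s : ℕ}
    (h : ∀ x ∈ M, f x = s) : (M.map f).sum = Multiset.card M * s := by
  induction M using Multiset.induction with
  | empty => simp
  | cons a M ih =>
    rw [Multiset.map_cons, Multiset.sum_cons, ih (fun x hx => h x (Multiset.mem_cons_of_mem hx)),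
      h a (Multiset.mem_cons_self _ _), Multiset.card_cons]
    ring

lemma wgt_eq {V : Type*} [Fintype V] [DecidableEq V] (C : Multiset (Finset V)) :
    wgt C = (C.map Finset.card).sum := by
  induction C using Multiset.induction with
  | empty => simp [wgt, freqC]
  | cons Q C ih =>
    rw [Multiset.map_cons, Multiset.sum_cons, ← ih]
    unfold wgt freqC
    have hterm : ∀ v : V, Multiset.card ((Q ::ₘ C).filter fun R => v ∈ R) =
        (if v ∈ Q then 1 else 0) + Multiset.card (C.filter fun R => v ∈ R) := by
      intro v
      rw [Multiset.filter_cons]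
      by_cases hv : v ∈ Q <;> simp [hv, Nat.add_comm]
    simp only [hterm]
    rw [Finset.sum_add_distrib]
    congr 1
    rw [Finset.sum_ite_mem, Finset.univ_inter, Finset.sum_const, smul_eq_mul, mul_one]

lemma cluster_reach {V : Type*} {G : SimpleGraph V} (h : IsClusterGraph G) {v w : V}
    (hr : G.Reachable v w) : v = w ∨ G.Adj v w := by
  obtain ⟨p⟩ := hr
  induction p with
  | nil => exact Or.inl rfl
  | @cons a x c hax p ih =>
    rcases ih with rfl | hxw
    · exact Or.inr hax
    · by_cases hac : a = c
      · exact Or.inl hac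
      · exact Or.inr (h hax hxw hac)

/-- If `G` has no isolated vertices and admits a sigma uniform clique cover of weight at
most `|V| + α`, then either `G` is already a uniform cluster graph, or some vertex split of
`G` produces a graph with no isolated vertices admitting a sigma uniform clique cover of
weight at most `|V| + 1 + α - 1`. -/
theorem stmt13 {V : Type*} [Fintype V] [DecidableEq V] (G : SimpleGraph V)
    (hiso : ∀ v : V, (G.neighborSet v).Nonempty) (α : ℕ)
    (C : Multiset (Finset V)) (hC : IsSigmaUniformCover G C)
    (hw : wgt C ≤ Fintype.card V + α) :
    IsUniformCluster G ∨
      ∃ (u : V) (A B : Set V), A ⊆ G.neighborSet u ∧ B ⊆ G.neighborSet u ∧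
        A ∪ B = G.neighborSet u ∧
        (∃ C' : Multiset (Finset (Option V)),
          IsSigmaUniformCover (splitGraph G u A B) C' ∧
          wgt C' ≤ Fintype.card (Option V) + α - 1) ∧
        (∀ x : Option V, ∃ y : Option V, (splitGraph G u A B).Adj x y) := by
  obtain ⟨hclq, ⟨s, hs⟩, hcov⟩ := hC
  by_cases hU : ∀ v : V, freqC C v ≤ 1
  · -- uniform cluster case
    left
    have hclu : IsClusterGraph G := by
      intro x y z hxy hyz hxz
      obtain ⟨Q, hQ, hxQ, hyQ⟩ := hcov x y hxy
      obtain ⟨Q', hQ', hyQ', hzQ'⟩ := hcov y z hyz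
      have hQQ : Q = Q' := mem_card_le_one (hU y)
        (Multiset.mem_filter.2 ⟨hQ, hyQ⟩) (Multiset.mem_filter.2 ⟨hQ', hyQ'⟩)
      subst hQQ
      exact hclq Q hQ hxQ hzQ' hxz
    refine ⟨hclu, ?_⟩
    have hcomp : ∀ v : V, (compSet G v).ncard = s := by
      intro v
      obtain ⟨b, hb⟩ := hiso v
      obtain ⟨Qv, hQv, hvQ, hbQ⟩ := hcov v b hb
      have hQeq : ∀ Q ∈ C, v ∈ Q → Q = Qv := fun Q hQ hvQ' =>
        mem_card_le_one (hU v) (Multiset.mem_filter.2 ⟨hQ, hvQ'⟩)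
          (Multiset.mem_filter.2 ⟨hQv, hvQ⟩)
      have hset : compSet G v = ↑Qv := by
        ext w
        constructor
        · intro hr
          rcases cluster_reach hclu hr with rfl | hadj
          · exact hvQ
          · obtain ⟨Q', hQ', hvQ', hwQ'⟩ := hcov v w hadj
            exact (hQeq Q' hQ' hvQ') ▸ hwQ'
        · intro hw
          by_cases hwv : w = v
          · subst hwv; exact SimpleGraph.Reachable.refl _
          · exact (hclq Qv hQv hvQ hw (Ne.symm hwv)).reachable
      rw [hset, Set.ncard_coe_finset, hs Qv hQv]
    intro v w
    rw [hcomp v, hcomp w]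
  · -- split case
    right
    push_neg at hU
    obtain ⟨u, hu2'⟩ := hU
    have hu2 : 2 ≤ Multiset.card (C.filter fun Q => u ∈ Q) := hu2'
    have hfilne : (C.filter fun Q => u ∈ Q) ≠ 0 := by
      intro h0; rw [h0] at hu2; simp at hu2
    obtain ⟨Q1, hQ1f⟩ := Multiset.exists_mem_of_ne_zero hfilne
    have hQ1C : Q1 ∈ C := (Multiset.mem_filter.1 hQ1f).1
    have huQ1 : u ∈ Q1 := (Multiset.mem_filter.1 hQ1f).2
    set D : Multiset (Finset V) := C.erase Q1 with hDdef
    have hCD : C = Q1 ::ₘ D := (Multiset.cons_erase hQ1C).symm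
    have hDsub : ∀ Q ∈ D, Q ∈ C := fun Q hQ => Multiset.mem_of_mem_erase hQ
    -- s ≥ 2
    have hs2 : 2 ≤ s := by
      obtain ⟨b, hb⟩ := hiso u
      obtain ⟨Q, hQ, huQ, hbQ⟩ := hcov u b hb
      have := hs Q hQ
      have : 1 < Q.card := Finset.one_lt_card.2 ⟨u, huQ, b, hbQ, hb.ne⟩
      omega
    -- a second u-clique in D
    have hD2 : ∃ Q2 ∈ D, u ∈ Q2 := by
      have : (D.filter fun Q => u ∈ Q) ≠ 0 := by
        intro h0
        have h3 : Multiset.filter (fun Q => u ∈ Q) C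
            = Q1 ::ₘ Multiset.filter (fun Q => u ∈ Q) D := by
          rw [hCD]
          exact Multiset.filter_cons_of_pos (p := fun Q => u ∈ Q) D huQ1
        rw [h3, h0] at hu2
        simp at hu2
      obtain ⟨Q2, hQ2⟩ := Multiset.exists_mem_of_ne_zero this
      exact ⟨Q2, (Multiset.mem_filter.1 hQ2).1, (Multiset.mem_filter.1 hQ2).2⟩
    set A : Set V := ↑(Q1.erase u) with hAdef
    set B : Set V := {b | ∃ Q ∈ D, u ∈ Q ∧ b ∈ Q ∧ b ≠ u} with hBdef
    have hmemA : ∀ a : V, a ∈ A ↔ (a ≠ u ∧ a ∈ Q1) := by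
      intro a; rw [hAdef]; simp [Finset.mem_erase, and_comm]
    have hAsub : A ⊆ G.neighborSet u := by
      intro a ha
      rw [hmemA] at ha
      exact hclq Q1 hQ1C huQ1 ha.2 (Ne.symm ha.1)
    have hBsub : B ⊆ G.neighborSet u := by
      rintro b ⟨Q, hQD, huQ, hbQ, hbu⟩
      exact hclq Q (hDsub Q hQD) huQ hbQ (Ne.symm hbu)
    have hABun : A ∪ B = G.neighborSet u := by
      apply Set.Subset.antisymm (Set.union_subset hAsub hBsub)
      intro b hb
      obtain ⟨Q, hQ, huQ, hbQ⟩ := hcov u b hb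
      rw [hCD, Multiset.mem_cons] at hQ
      rcases hQ with rfl | hQD
      · exact Or.inl ((hmemA b).2 ⟨hb.ne', hbQ⟩)
      · exact Or.inr ⟨Q, hQD, huQ, hbQ, hb.ne'⟩
    refine ⟨u, A, B, hAsub, hBsub, hABun, ?_, ?_⟩
    · -- the cover C'
      classical
      set g : Finset V → Finset (Option V) := fun Q =>
        if u ∈ Q then insert none ((Q.erase u).image some) else Q.image some with hgdef
      set C' : Multiset (Finset (Option V)) := (Q1.image some) ::ₘ D.map g with hC'def
      have hsome_inj : Function.Injective (some : V → Option V) := Option.some_injective V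
      have hcard' : ∀ R ∈ C', R.card = s := by
        intro R hR
        rw [hC'def, Multiset.mem_cons] at hR
        rcases hR with rfl | hR
        · rw [Finset.card_image_of_injective _ hsome_inj, hs Q1 hQ1C]
        · obtain ⟨Q, hQD, rfl⟩ := Multiset.mem_map.1 hR
          have hQs := hs Q (hDsub Q hQD)
          rw [hgdef]
          by_cases huQ : u ∈ Q
          · simp only [if_pos huQ]
            rw [Finset.card_insert_of_notMem (by simp),
              Finset.card_image_of_injective _ hsome_inj, Finset.card_erase_of_mem huQ, hQs]
            omega
          · simp only [if_neg huQ]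
            rw [Finset.card_image_of_injective _ hsome_inj, hQs]
      have hclq' : ∀ R ∈ C', (splitGraph G u A B).IsClique (R : Set (Option V)) := by
        intro R hR
        rw [hC'def, Multiset.mem_cons] at hR
        rcases hR with rfl | hR
        · intro x hx y hy hne
          simp only [Finset.coe_image, Set.mem_image, Finset.mem_coe] at hx hy
          obtain ⟨a, haQ, rfl⟩ := hx
          obtain ⟨b, hbQ, rfl⟩ := hy
          have hab : a ≠ b := fun h => hne (by rw [h])
          rw [split_adj_ss]
          by_cases hau : a = u
          · subst hau
            exact Or.inr (Or.inl ⟨rfl, fun h => hab h.symm, (hmemA b).2 ⟨fun h => hab h.symm, hbQ⟩⟩)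
          · by_cases hbu : b = u
            · subst hbu
              exact Or.inr (Or.inr ⟨rfl, hau, (hmemA a).2 ⟨hau, haQ⟩⟩)
            · exact Or.inl ⟨hau, hbu, hclq Q1 hQ1C haQ hbQ hab⟩
        · obtain ⟨Q, hQD, rfl⟩ := Multiset.mem_map.1 hR
          have hQC := hDsub Q hQD
          intro x hx y hy hne
          rw [hgdef] at hx hy
          by_cases huQ : u ∈ Q
          · simp only [if_pos huQ, Finset.coe_insert, Set.mem_insert_iff, Finset.coe_image,
              Set.mem_image, Finset.mem_coe] at hx hy
            rcases hx with rfl | ⟨a, haQ, rfl⟩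
            · rcases hy with rfl | ⟨b, hbQ, rfl⟩
              · exact absurd rfl hne
              · rw [split_adj_ns]
                rw [Finset.mem_erase] at hbQ
                exact ⟨hbQ.1, ⟨Q, hQD, huQ, hbQ.2, hbQ.1⟩⟩
            · rcases hy with rfl | ⟨b, hbQ, rfl⟩
              · rw [split_adj_sn]
                rw [Finset.mem_erase] at haQ
                exact ⟨haQ.1, ⟨Q, hQD, huQ, haQ.2, haQ.1⟩⟩
              · rw [Finset.mem_erase] at haQ hbQ
                have hab : a ≠ b := fun h => hne (by rw [h])
                rw [split_adj_ss]
                exact Or.inl ⟨haQ.1, hbQ.1, hclq Q hQC haQ.2 hbQ.2 hab⟩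
          · simp only [if_neg huQ, Finset.coe_image, Set.mem_image, Finset.mem_coe] at hx hy
            obtain ⟨a, haQ, rfl⟩ := hx
            obtain ⟨b, hbQ, rfl⟩ := hy
            have hab : a ≠ b := fun h => hne (by rw [h])
            rw [split_adj_ss]
            exact Or.inl ⟨fun h => huQ (h ▸ haQ), fun h => huQ (h ▸ hbQ),
              hclq Q hQC haQ hbQ hab⟩
      have hcov' : ∀ x y : Option V, (splitGraph G u A B).Adj x y →
          ∃ R ∈ C', x ∈ R ∧ y ∈ R := by
        have hmemg_none : ∀ Q ∈ D, u ∈ Q → none ∈ g Q := by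
          intro Q hQD huQ; rw [hgdef]; simp only [if_pos huQ]; exact Finset.mem_insert_self _ _
        have hmemg_some : ∀ Q ∈ D, ∀ a ∈ Q, a ≠ u → some a ∈ g Q := by
          intro Q hQD a haQ hau
          rw [hgdef]
          by_cases huQ : u ∈ Q
          · simp only [if_pos huQ]
            exact Finset.mem_insert_of_mem
              (Finset.mem_image_of_mem _ (Finset.mem_erase.2 ⟨hau, haQ⟩))
          · simp only [if_neg huQ]
            exact Finset.mem_image_of_mem _ haQ
        have hginC' : ∀ Q ∈ D, g Q ∈ C' := by
          intro Q hQD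
          rw [hC'def]
          exact Multiset.mem_cons_of_mem (Multiset.mem_map_of_mem g hQD)
        have hQ1inC' : Q1.image some ∈ C' := by rw [hC'def]; exact Multiset.mem_cons_self _ _
        intro x y hxy
        match x, y with
        | none, none => rw [split_adj_nn] at hxy; exact hxy.elim
        | none, some b =>
          rw [split_adj_ns] at hxy
          obtain ⟨hbu, Q, hQD, huQ, hbQ, hbu'⟩ := hxy
          exact ⟨g Q, hginC' Q hQD, hmemg_none Q hQD huQ, hmemg_some Q hQD b hbQ hbu'⟩
        | some a, none =>
          rw [split_adj_sn] at hxy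
          obtain ⟨hau, Q, hQD, huQ, haQ, hau'⟩ := hxy
          exact ⟨g Q, hginC' Q hQD, hmemg_some Q hQD a haQ hau', hmemg_none Q hQD huQ⟩
        | some a, some b =>
          rw [split_adj_ss] at hxy
          rcases hxy with ⟨hau, hbu, hadj⟩ | ⟨rfl, hbu, hbA⟩ | ⟨rfl, hau, haA⟩
          · obtain ⟨Q, hQ, haQ, hbQ⟩ := hcov a b hadj
            rw [hCD, Multiset.mem_cons] at hQ
            rcases hQ with rfl | hQD
            · exact ⟨Q.image some, hQ1inC', Finset.mem_image_of_mem _ haQ,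
                Finset.mem_image_of_mem _ hbQ⟩
            · exact ⟨g Q, hginC' Q hQD, hmemg_some Q hQD a haQ hau,
                hmemg_some Q hQD b hbQ hbu⟩
          · rw [hmemA] at hbA
            exact ⟨Q1.image some, hQ1inC', Finset.mem_image_of_mem _ huQ1,
              Finset.mem_image_of_mem _ hbA.2⟩
          · rw [hmemA] at haA
            exact ⟨Q1.image some, hQ1inC', Finset.mem_image_of_mem _ haA.2,
              Finset.mem_image_of_mem _ huQ1⟩
      refine ⟨C', ⟨hclq', ⟨s, hcard'⟩, hcov'⟩, ?_⟩
      -- weight computation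
      have hwC : wgt C = Multiset.card C * s := by
        rw [wgt_eq]
        apply sum_map_const_of
        intro Q hQ; exact hs Q hQ
      have hwC' : wgt C' = Multiset.card C' * s := by
        rw [wgt_eq]
        apply sum_map_const_of
        intro R hR; exact hcard' R hR
      have hcardC' : Multiset.card C' = Multiset.card C := by
        rw [hC'def, hCD]
        simp
      have hwgt_eq : wgt C' = wgt C := by rw [hwC, hwC', hcardC']
      rw [hwgt_eq, Fintype.card_option]
      omega
    · -- no isolated vertices in the split graph
      intro x
      match x with
      | none =>
        obtain ⟨Q2, hQ2D, huQ2⟩ := hD2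
        have hcard2 : Q2.card = s := hs Q2 (hDsub Q2 hQ2D)
        have : (Q2.erase u).Nonempty := by
          rw [← Finset.card_pos, Finset.card_erase_of_mem huQ2, hcard2]
          omega
        obtain ⟨b, hb⟩ := this
        rw [Finset.mem_erase] at hb
        exact ⟨some b, (split_adj_ns G u A B b).2 ⟨hb.1, ⟨Q2, hQ2D, huQ2, hb.2, hb.1⟩⟩⟩
      | some a =>
        by_cases hau : a = u
        · subst hau
          have hcard1 : Q1.card = s := hs Q1 hQ1C
          have : (Q1.erase a).Nonempty := by
            rw [← Finset.card_pos, Finset.card_erase_of_mem huQ1, hcard1]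
            omega
          obtain ⟨b, hb⟩ := this
          rw [Finset.mem_erase] at hb
          exact ⟨some b, (split_adj_ss G a A B a b).2
            (Or.inr (Or.inl ⟨rfl, hb.1, (hmemA b).2 ⟨hb.1, hb.2⟩⟩))⟩
        · obtain ⟨b, hb⟩ := hiso a
          by_cases hbu : b = u
          · subst hbu
            have haN : a ∈ A ∪ B := by rw [hABun]; exact (SimpleGraph.mem_neighborSet G b a).2 hb.symm
            rcases haN with haA | haB
            · exact ⟨some b, (split_adj_ss G b A B a b).2 (Or.inr (Or.inr ⟨rfl, hau, haA⟩))⟩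
            · exact ⟨none, (split_adj_sn G b A B a).2 ⟨hau, haB⟩⟩
          · exact ⟨some b, (split_adj_ss G u A B a b).2 (Or.inl ⟨hau, hbu, hb⟩)⟩


end Paper
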